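/- arXiv:2308.06058 — 2 statements merged into one kernel-verified Lean document; each statement's English description precedes it below -/
import Mathlib

section
/- Let L > 0 and c_p > 0. For each t ∈ ℕ let f_t : E → ℝ be convex, differentiable and L-smooth, and suppose there is a common minimizer x* ∈ E with f_t(x*) ≤ f_t(y) for all y ∈ E and all t (interpolation). Starting from x_0 ∈ E, define SGD iterates x_{t+1} = x_t − η_t∇f_t(x_t), where (η_t) are the AdaSPS stepsizes with lower bounds ℓ_t = f_t(x*), and assume ∇f_t(x_t) ≠ 0 for all t. If c_p·√(f_0(x_0) − f_0(x*)) ≥ 1, then for every T ≥ 1: Σ_{t=1}^{T} (f_t(x_t) − f_t(x*)) ≤ 4·c_p²·L²·‖x_0 − x*‖⁴. -/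
open Finset RealInnerProductSpace intervalIntegral

variable {E : Type*} [NormedAddCommGroup E] [InnerProductSpace ℝ E] [CompleteSpace E]

lemma descent_lemma {L : ℝ} (hL : 0 < L) {f : E → ℝ} {G : E → E}
    (hgrad : ∀ y, HasGradientAt f (G y) y)
    (hlip : ∀ u v, ‖G u - G v‖ ≤ L * ‖u - v‖) (x v : E) :
    f (x + v) ≤ f x + ⟪G x, v⟫ + L / 2 * ‖v‖ ^ 2 := by
  have hcontG : Continuous G := by
    refine (LipschitzWith.of_dist_le_mul (K := Real.toNNReal L) (f := G) ?_).continuous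
    intro u w
    simpa [dist_eq_norm, Real.coe_toNNReal L hL.le] using hlip u w
  set φ' : ℝ → ℝ := fun t => ⟪G (x + t • v), v⟫ with hφ'
  have hderiv : ∀ t : ℝ, HasDerivAt (fun t : ℝ => f (x + t • v)) (φ' t) t := by
    intro t
    have h1 : HasDerivAt (fun t : ℝ => x + t • v) v t := by
      simpa using ((hasDerivAt_id t).smul_const v).const_add x
    have h2 := (hgrad (x + t • v)).hasFDerivAt
    have h3 := h2.comp_hasDerivAt t h1
    simpa [φ', InnerProductSpace.toDual_apply_apply, Function.comp_def] using h3
  have hcontφ' : Continuous φ' := by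
    apply Continuous.inner
    · exact hcontG.comp (by continuity)
    · exact continuous_const
  have hint : IntervalIntegrable φ' MeasureTheory.volume 0 1 :=
    (hcontφ'.intervalIntegrable 0 1)
  have hftc : ∫ t in (0:ℝ)..1, φ' t = f (x + v) - f x := by
    have := intervalIntegral.integral_eq_sub_of_hasDerivAt
      (f := fun t : ℝ => f (x + t • v)) (f' := φ')
      (fun t _ => hderiv t) hint
    simpa using this
  have hbound : ∫ t in (0:ℝ)..1, φ' t ≤ ∫ t in (0:ℝ)..1, (⟪G x, v⟫ + L * t * ‖v‖ ^ 2) := by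
    apply intervalIntegral.integral_mono_on (by norm_num) hint
    · apply Continuous.intervalIntegrable; continuity
    · intro t ht
      have h1 : φ' t - ⟪G x, v⟫ = ⟪G (x + t • v) - G x, v⟫ := by
        simp [φ', inner_sub_left]
      have h2 : ⟪G (x + t • v) - G x, v⟫ ≤ L * t * ‖v‖ ^ 2 := by
        calc ⟪G (x + t • v) - G x, v⟫ ≤ ‖G (x + t • v) - G x‖ * ‖v‖ :=
              real_inner_le_norm _ _
          _ ≤ (L * ‖(x + t • v) - x‖) * ‖v‖ := by
              gcongr; exact hlip _ _
          _ = L * t * ‖v‖ ^ 2 := by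
              rw [show (x + t • v) - x = t • v by abel]
              rw [norm_smul, Real.norm_eq_abs, abs_of_nonneg ht.1]
              ring
      linarith [h1 ▸ h2]
  have hval : ∫ t in (0:ℝ)..1, (⟪G x, v⟫ + L * t * ‖v‖ ^ 2) = ⟪G x, v⟫ + L / 2 * ‖v‖ ^ 2 := by
    rw [intervalIntegral.integral_add (by apply Continuous.intervalIntegrable; continuity)
      (by apply Continuous.intervalIntegrable; continuity)]
    have h2 : ∫ t in (0:ℝ)..1, L * t * ‖v‖ ^ 2 = L / 2 * ‖v‖ ^ 2 := by
      calc ∫ t in (0:ℝ)..1, L * t * ‖v‖ ^ 2 = ∫ t in (0:ℝ)..1, (L * ‖v‖ ^ 2) * t := by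
            congr 1; ext t; ring
        _ = (L * ‖v‖ ^ 2) * ∫ t in (0:ℝ)..1, t := intervalIntegral.integral_const_mul _ _
        _ = L / 2 * ‖v‖ ^ 2 := by rw [integral_id]; ring
    rw [h2]; simp
  linarith [hftc ▸ (hval ▸ hbound)]

lemma coco_lemma {L : ℝ} (hL : 0 < L) {f : E → ℝ} {G : E → E} {xstar : E}
    (hgrad : ∀ y, HasGradientAt f (G y) y)
    (hlip : ∀ u v, ‖G u - G v‖ ≤ L * ‖u - v‖)
    (hmin : ∀ y, f xstar ≤ f y) (y : E) :
    ‖G y‖ ^ 2 ≤ 2 * L * (f y - f xstar) := by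
  have h := descent_lemma hL hgrad hlip y (-(L⁻¹ • G y))
  have h2 : f xstar ≤ f (y + -(L⁻¹ • G y)) := hmin _
  have h3 : ⟪G y, -(L⁻¹ • G y)⟫ = -(L⁻¹ * ‖G y‖ ^ 2) := by
    rw [inner_neg_right, real_inner_smul_right, real_inner_self_eq_norm_sq]
  have h4 : ‖-(L⁻¹ • G y)‖ ^ 2 = L⁻¹ ^ 2 * ‖G y‖ ^ 2 := by
    rw [norm_neg, norm_smul, Real.norm_eq_abs, abs_of_nonneg (by positivity), mul_pow]
  rw [h3, h4] at h
  have hLne : L ≠ 0 := hL.ne'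
  have : L / 2 * (L⁻¹ ^ 2 * ‖G y‖ ^ 2) = ‖G y‖ ^ 2 / (2 * L) := by field_simp
  rw [this] at h
  have h5 : f xstar ≤ f y - L⁻¹ * ‖G y‖ ^ 2 + ‖G y‖ ^ 2 / (2 * L) := le_trans h2 (by linarith)
  have h6 : L⁻¹ * ‖G y‖ ^ 2 - ‖G y‖ ^ 2 / (2 * L) = ‖G y‖ ^ 2 / (2 * L) := by
    field_simp; ring
  have h7 : ‖G y‖ ^ 2 / (2 * L) ≤ f y - f xstar := by linarith
  have h8 := (div_le_iff₀ (by positivity : (0:ℝ) < 2 * L)).mp h7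
  have h9 : (f y - f xstar) * (2 * L) = 2 * L * (f y - f xstar) := mul_comm _ _
  linarith


/-- AdaSPS under interpolation: with convex, `L`-smooth `f t` sharing a common
minimizer `x*`, SGD iterates with AdaSPS stepsizes (lower bounds `ℓ t = f t x*`),
nonzero gradients at the iterates, and `c_p·√(f_0(x_0) − f_0(x*)) ≥ 1`, one has for
every `T ≥ 1`: `Σ_{t=1}^{T} (f_t(x_t) − f_t(x*)) ≤ 4 c_p² L² ‖x_0 − x*‖⁴`. -/
theorem stmt_12 {d : ℕ} (L c_p : ℝ) (hL : 0 < L) (hcp : 0 < c_p)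
    (xstar : EuclideanSpace ℝ (Fin d))
    (f : ℕ → EuclideanSpace ℝ (Fin d) → ℝ)
    (G : ℕ → EuclideanSpace ℝ (Fin d) → EuclideanSpace ℝ (Fin d))
    (x : ℕ → EuclideanSpace ℝ (Fin d)) (η : ℕ → ℝ)
    (hgrad : ∀ t y, HasGradientAt (f t) (G t y) y)
    (hconv : ∀ t u v, f t v ≥ f t u + ⟪G t u, v - u⟫)
    (hsmooth : ∀ t u v, ‖G t u - G t v‖ ≤ L * ‖u - v‖)
    (hmin : ∀ t y, f t xstar ≤ f t y)
    (hGne : ∀ t, G t (x t) ≠ 0)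
    (hη0 : η 0 = (f 0 (x 0) - f 0 xstar) /
      (c_p * ‖G 0 (x 0)‖ ^ 2 * Real.sqrt (f 0 (x 0) - f 0 xstar)))
    (hη : ∀ t, η (t + 1) = min
      ((f (t + 1) (x (t + 1)) - f (t + 1) xstar) /
        (c_p * ‖G (t + 1) (x (t + 1))‖ ^ 2 *
          Real.sqrt (∑ s ∈ range (t + 2), (f s (x s) - f s xstar))))
      (η t))
    (hx : ∀ t, x (t + 1) = x t - η t • G t (x t))
    (hscale : 1 ≤ c_p * Real.sqrt (f 0 (x 0) - f 0 xstar)) :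
    ∀ T : ℕ, 1 ≤ T →
      (∑ t ∈ Finset.Icc 1 T, (f t (x t) - f t xstar)) ≤
        4 * c_p ^ 2 * L ^ 2 * ‖x 0 - xstar‖ ^ 4 := by
  intro T hT
  set δ : ℕ → ℝ := fun t => f t (x t) - f t xstar with hδdef
  set S : ℕ → ℝ := fun n => ∑ s ∈ range (n + 1), (f s (x s) - f s xstar) with hSdef
  have hcoco : ∀ t (y : EuclideanSpace ℝ (Fin d)), ‖G t y‖ ^ 2 ≤ 2 * L * (f t y - f t xstar) :=
    fun t y => coco_lemma hL (hgrad t) (hsmooth t) (hmin t) y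
  have hδpos : ∀ t, 0 < δ t := by
    intro t
    have h1 := hcoco t (x t)
    have h2 : 0 < ‖G t (x t)‖ := norm_pos_iff.mpr (hGne t)
    show 0 < f t (x t) - f t xstar
    nlinarith
  have hSδ : ∀ n, S n = ∑ s ∈ range (n + 1), δ s := fun n => rfl
  have hSmono : ∀ a b, a ≤ b → S a ≤ S b := by
    intro a b hab
    rw [hSδ, hSδ]
    exact Finset.sum_le_sum_of_subset_of_nonneg
      (Finset.range_subset_range.mpr (by omega)) (fun i _ _ => (hδpos i).le)
  have hSpos : ∀ n, 0 < S n := by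
    intro n
    rw [hSδ]
    exact Finset.sum_pos (fun i _ => hδpos i) ⟨0, Finset.mem_range.mpr (by omega)⟩
  have hS0 : S 0 = δ 0 := by rw [hSδ]; simp
  have hscaleS : ∀ n, 1 ≤ c_p * Real.sqrt (S n) := by
    intro n
    have h1 : Real.sqrt (δ 0) ≤ Real.sqrt (S n) :=
      Real.sqrt_le_sqrt (hS0 ▸ hSmono 0 n (Nat.zero_le n))
    have : c_p * Real.sqrt (δ 0) ≤ c_p * Real.sqrt (S n) :=
      mul_le_mul_of_nonneg_left h1 hcp.le
    exact le_trans hscale this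
  have hg2pos : ∀ t, (0 : ℝ) < ‖G t (x t)‖ ^ 2 :=
    fun t => pow_pos (norm_pos_iff.mpr (hGne t)) 2
  have hsqrtpos : ∀ n, 0 < Real.sqrt (S n) := fun n => Real.sqrt_pos.mpr (hSpos n)
  have hdenpos : ∀ t, 0 < c_p * ‖G t (x t)‖ ^ 2 * Real.sqrt (S t) :=
    fun t => mul_pos (mul_pos hcp (hg2pos t)) (hsqrtpos t)
  have hηub : ∀ t, η t ≤ δ t / (c_p * ‖G t (x t)‖ ^ 2 * Real.sqrt (S t)) := by
    intro t
    cases t with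
    | zero =>
      rw [hη0]
      have hs : S 0 = f 0 (x 0) - f 0 xstar := hS0
      rw [hs]
    | succ n =>
      rw [hη n]
      exact min_le_left _ _
  have hηpos : ∀ t, 0 < η t := by
    intro t
    induction t with
    | zero =>
      rw [hη0]
      have := hdenpos 0
      rw [hS0] at this
      exact div_pos (hδpos 0) this
    | succ n ih =>
      rw [hη n]
      exact lt_min (div_pos (hδpos (n + 1)) (hdenpos (n + 1))) ih
  have hhelper : ∀ t, 1 / (2 * L * c_p * Real.sqrt (S t)) ≤
      δ t / (c_p * ‖G t (x t)‖ ^ 2 * Real.sqrt (S t)) := by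
    intro t
    rw [div_le_div_iff₀ (mul_pos (mul_pos (by positivity) hcp) (hsqrtpos t)) (hdenpos t)]
    have h1 : ‖G t (x t)‖ ^ 2 ≤ 2 * L * δ t := hcoco t (x t)
    have h2 : (0 : ℝ) ≤ c_p * Real.sqrt (S t) :=
      mul_nonneg hcp.le (hsqrtpos t).le
    nlinarith [mul_le_mul_of_nonneg_right h1 h2, hδpos t]
  have hηlb : ∀ t, 1 / (2 * L * c_p * Real.sqrt (S t)) ≤ η t := by
    intro t
    induction t with
    | zero =>
      rw [hη0]
      have := hhelper 0
      rw [hS0] at this ⊢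
      exact this
    | succ n ih =>
      rw [hη n]
      refine le_min (hhelper (n + 1)) (le_trans ?_ ih)
      apply one_div_le_one_div_of_le
        (mul_pos (mul_pos (by positivity) hcp) (hsqrtpos n))
      have h5 : Real.sqrt (S n) ≤ Real.sqrt (S (n + 1)) :=
        Real.sqrt_le_sqrt (hSmono n (n + 1) (by omega))
      exact mul_le_mul_of_nonneg_left h5 (by positivity)
  have hdescent : ∀ t, ‖x (t + 1) - xstar‖ ^ 2 ≤ ‖x t - xstar‖ ^ 2 - η t * δ t := by
    intro t
    have hxs : x (t + 1) - xstar = (x t - xstar) - η t • G t (x t) := by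
      rw [hx t]; abel
    rw [hxs, norm_sub_sq_real]
    have hinner : ⟪x t - xstar, η t • G t (x t)⟫ = η t * ⟪G t (x t), x t - xstar⟫ := by
      rw [real_inner_smul_right, real_inner_comm]
    have hnorm : ‖η t • G t (x t)‖ ^ 2 = η t ^ 2 * ‖G t (x t)‖ ^ 2 := by
      rw [norm_smul, mul_pow, Real.norm_eq_abs, sq_abs]
    have hc : δ t ≤ ⟪G t (x t), x t - xstar⟫ := by
      have h1 := hconv t (x t) xstar
      have h2 : ⟪G t (x t), xstar - x t⟫ = -⟪G t (x t), x t - xstar⟫ := by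
        rw [← inner_neg_right]; congr 1; abel
      rw [h2] at h1
      show f t (x t) - f t xstar ≤ _
      linarith
    have hsq : η t ^ 2 * ‖G t (x t)‖ ^ 2 ≤ η t * δ t := by
      have h1 := mul_le_mul_of_nonneg_right (hηub t) (hg2pos t).le
      have heq : δ t / (c_p * ‖G t (x t)‖ ^ 2 * Real.sqrt (S t)) * ‖G t (x t)‖ ^ 2
          = δ t / (c_p * Real.sqrt (S t)) := by
        have hne1 : ‖G t (x t)‖ ^ 2 ≠ 0 := (hg2pos t).ne'
        have hne2 : c_p ≠ 0 := hcp.ne'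
        have hne3 : Real.sqrt (S t) ≠ 0 := (hsqrtpos t).ne'
        field_simp
        exact mul_div_cancel_right₀ _ (norm_ne_zero_iff.mpr (hGne t))
      rw [heq] at h1
      have h2 : δ t / (c_p * Real.sqrt (S t)) ≤ δ t :=
        div_le_self (hδpos t).le (hscaleS t)
      have h3 : η t * ‖G t (x t)‖ ^ 2 ≤ δ t := le_trans h1 h2
      calc η t ^ 2 * ‖G t (x t)‖ ^ 2 = η t * (η t * ‖G t (x t)‖ ^ 2) := by ring
        _ ≤ η t * δ t := mul_le_mul_of_nonneg_left h3 (hηpos t).le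
    have hcross := mul_le_mul_of_nonneg_left hc (hηpos t).le
    rw [hinner, hnorm]
    linarith
  have hsumtel : ∀ n : ℕ, ∑ t ∈ range n, η t * δ t ≤
      ‖x 0 - xstar‖ ^ 2 - ‖x n - xstar‖ ^ 2 := by
    intro n
    induction n with
    | zero => simp
    | succ m ih =>
      rw [Finset.sum_range_succ]
      have := hdescent m
      linarith
  have hsum : ∀ n : ℕ, ∑ t ∈ range (n + 1), η t * δ t ≤ ‖x 0 - xstar‖ ^ 2 := by
    intro n
    have h1 := hsumtel (n + 1)
    nlinarith [sq_nonneg ‖x (n + 1) - xstar‖]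
  set R := Real.sqrt (S T) with hR
  set D := ‖x 0 - xstar‖ ^ 2 with hD
  have hRpos : 0 < R := hsqrtpos T
  have hDpos : 0 ≤ D := by positivity
  have hkey : S T ≤ 2 * L * c_p * R * D := by
    have hterm : ∀ t ∈ range (T + 1), δ t ≤ (2 * L * c_p * R) * (η t * δ t) := by
      intro t ht
      have htT : t ≤ T := by
        have := Finset.mem_range.mp ht; omega
      have h2 : Real.sqrt (S t) ≤ R := Real.sqrt_le_sqrt (hSmono t T htT)
      have hAR : (0:ℝ) < 2 * L * c_p * R :=
        mul_pos (mul_pos (by positivity) hcp) hRpos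
      have h3 : 1 / (2 * L * c_p * R) ≤ η t := by
        refine le_trans ?_ (hηlb t)
        apply one_div_le_one_div_of_le
          (mul_pos (mul_pos (by positivity) hcp) (hsqrtpos t))
        exact mul_le_mul_of_nonneg_left h2 (by positivity)
      have h4 : 1 ≤ (2 * L * c_p * R) * η t := by
        have := (div_le_iff₀ hAR).mp h3
        nlinarith
      nlinarith [mul_le_mul_of_nonneg_right h4 (hδpos t).le]
    calc S T = ∑ t ∈ range (T + 1), δ t := hSδ T
      _ ≤ ∑ t ∈ range (T + 1), (2 * L * c_p * R) * (η t * δ t) :=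
          Finset.sum_le_sum hterm
      _ = (2 * L * c_p * R) * ∑ t ∈ range (T + 1), η t * δ t := by
          rw [Finset.mul_sum]
      _ ≤ (2 * L * c_p * R) * D :=
          mul_le_mul_of_nonneg_left (hsum T) (by positivity)
      _ = 2 * L * c_p * R * D := by ring
  have hR2 : R * R = S T := Real.mul_self_sqrt (hSpos T).le
  have hRle : R ≤ 2 * L * c_p * D := by
    have h1 : R * R ≤ (2 * L * c_p * D) * R := by nlinarith
    exact le_of_mul_le_mul_right h1 hRpos
  have hST : S T ≤ 4 * c_p ^ 2 * L ^ 2 * D ^ 2 := by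
    nlinarith [mul_self_le_mul_self hRpos.le hRle]
  have hsub : Finset.Icc 1 T ⊆ range (T + 1) := by
    intro i hi
    simp only [Finset.mem_Icc] at hi
    exact Finset.mem_range.mpr (by omega)
  have hfinal : (∑ t ∈ Finset.Icc 1 T, (f t (x t) - f t xstar)) ≤ S T := by
    rw [hSδ]
    exact Finset.sum_le_sum_of_subset_of_nonneg hsub (fun i _ _ => (hδpos i).le)
  calc (∑ t ∈ Finset.Icc 1 T, (f t (x t) - f t xstar)) ≤ S T := hfinal
    _ ≤ 4 * c_p ^ 2 * L ^ 2 * D ^ 2 := hST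
    _ = 4 * c_p ^ 2 * L ^ 2 * ‖x 0 - xstar‖ ^ 4 := by rw [hD]; ring
end

section
/- Let 0 < μ ≤ L and c_p > 0. For each t ∈ ℕ let f_t : E → ℝ be differentiable, L-smooth and μ-strongly convex, with a common minimizer x* ∈ E satisfying f_t(x*) ≤ f_t(y) for all y ∈ E and all t. Starting from x_0 ∈ E, define SGD iterates x_{t+1} = x_t − η_t∇f_t(x_t), where (η_t) are the AdaSPS stepsizes with ℓ_t = f_t(x*), and assume ∇f_t(x_t) ≠ 0 for all t. If c_p·√(f_0(x_0) − f_0(x*)) ≥ 1, then for every T ∈ ℕ: ‖x_T − x*‖² ≤ (1 − μ/(4·c_p²·L²·‖x_0 − x*‖²))^T · ‖x_0 − x*‖², and the contraction factor satisfies 0 ≤ 1 − μ/(4·c_p²·L²·‖x_0 − x*‖²) < 1. -/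
open Finset RealInnerProductSpace

lemma descent_aux' {E : Type*} [NormedAddCommGroup E] [InnerProductSpace ℝ E] [CompleteSpace E]
    {f : E → ℝ} {G : E → E} {L : ℝ}
    (hgrad : ∀ y, HasGradientAt f (G y) y)
    (hsmooth : ∀ u v, ‖G u - G v‖ ≤ L * ‖u - v‖) (u v : E) :
    f v ≤ f u + ⟪G u, v - u⟫ + L / 2 * ‖v - u‖ ^ 2 := by
  set w := v - u with hw
  set φ : ℝ → ℝ := fun s => f (u + s • w) - s * ⟪G u, w⟫ - L / 2 * s ^ 2 * ‖w‖ ^ 2 with hφ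
  have hd : ∀ s : ℝ, HasDerivAt φ
      (⟪G (u + s • w), w⟫ - ⟪G u, w⟫ - L * s * ‖w‖ ^ 2) s := by
    intro s
    have hγ : HasDerivAt (fun s : ℝ => u + s • w) w s := by
      simpa using (hasDerivAt_id s |>.smul_const w).const_add u
    have h1 : HasDerivAt (fun s : ℝ => f (u + s • w)) ⟪G (u + s • w), w⟫ s := by
      have := ((hgrad (u + s • w)).hasFDerivAt.comp_hasDerivAt s hγ)
      simp [InnerProductSpace.toDual_apply_apply] at this; exact this
    have h2 : HasDerivAt (fun s : ℝ => s * ⟪G u, w⟫) ⟪G u, w⟫ s := by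
      simpa using (hasDerivAt_id s).mul_const (⟪G u, w⟫)
    have h3 : HasDerivAt (fun s : ℝ => L / 2 * s ^ 2 * ‖w‖ ^ 2) (L * s * ‖w‖ ^ 2) s := by
      have := ((hasDerivAt_pow 2 s).const_mul (L / 2)).mul_const (‖w‖ ^ 2)
      convert this using 1
      · rfl
      · rfl
      · rw [show (2:ℕ) - 1 = 1 from rfl]; push_cast; ring
    exact (h1.sub h2).sub h3
  have hmono : AntitoneOn φ (Set.Icc (0:ℝ) 1) := by
    apply antitoneOn_of_deriv_nonpos (convex_Icc 0 1)
    · exact fun s _ => (hd s).differentiableAt.continuousAt.continuousWithinAt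
    · intro s hs
      exact (hd s).differentiableAt.differentiableWithinAt
    · intro s hs
      rw [(hd s).deriv]
      have hs0 : 0 ≤ s := by
        rw [interior_Icc] at hs; exact le_of_lt hs.1
      have : ⟪G (u + s • w) - G u, w⟫ ≤ L * s * ‖w‖ ^ 2 := by
        calc ⟪G (u + s • w) - G u, w⟫ ≤ ‖G (u + s • w) - G u‖ * ‖w‖ :=
              real_inner_le_norm _ _
          _ ≤ (L * ‖(u + s • w) - u‖) * ‖w‖ := by
              apply mul_le_mul_of_nonneg_right (hsmooth _ _) (norm_nonneg _)
          _ = L * s * ‖w‖ ^ 2 := by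
              simp [norm_smul, abs_of_nonneg hs0]; ring
      have h' : ⟪G (u + s • w), w⟫ - ⟪G u, w⟫ = ⟪G (u + s • w) - G u, w⟫ := by
        rw [inner_sub_left]
      linarith
  have := hmono (Set.left_mem_Icc.2 zero_le_one) (Set.right_mem_Icc.2 zero_le_one) zero_le_one
  simp only [hφ] at this
  norm_num at this
  have hv : u + w = v := by rw [hw]; abel
  rw [hv] at this
  linarith


lemma grad_sq_le' {E : Type*} [NormedAddCommGroup E] [InnerProductSpace ℝ E] [CompleteSpace E]
    {f : E → ℝ} {G : E → E} {L : ℝ} (hL : 0 < L)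
    (hgrad : ∀ y, HasGradientAt f (G y) y)
    (hsmooth : ∀ u v, ‖G u - G v‖ ≤ L * ‖u - v‖)
    {xstar : E} (hmin : ∀ y, f xstar ≤ f y) (u : E) :
    ‖G u‖ ^ 2 ≤ 2 * L * (f u - f xstar) := by
  have h := descent_aux' hgrad hsmooth u (u - (1/L) • G u)
  have h1 : (u - (1/L) • G u) - u = -((1/L) • G u) := by abel
  rw [h1] at h
  have h2 : ⟪G u, -((1/L) • G u)⟫ = -((1/L) * ‖G u‖^2) := by
    rw [inner_neg_right, real_inner_smul_right, real_inner_self_eq_norm_sq]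
  have h3 : ‖-((1/L) • G u)‖^2 = (1/L)^2 * ‖G u‖^2 := by
    rw [norm_neg, norm_smul, mul_pow, Real.norm_eq_abs, sq_abs]
  rw [h2, h3] at h
  have h4 := hmin (u - (1/L) • G u)
  have hL' : (L:ℝ) ≠ 0 := ne_of_gt hL
  have key : f xstar ≤ f u - ‖G u‖^2 / (2*L) := by
    have : -((1/L) * ‖G u‖^2) + L/2 * ((1/L)^2 * ‖G u‖^2) = -(‖G u‖^2/(2*L)) := by
      field_simp; ring
    linarith [h4.trans h]
  have key2 : ‖G u‖^2/(2*L) ≤ f u - f xstar := by linarith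
  rw [div_le_iff₀ (by positivity : (0:ℝ) < 2*L)] at key2
  linarith [key2]


set_option maxHeartbeats 1600000 in
/-- AdaSPS linear convergence under strong convexity and interpolation: with
`L`-smooth, `μ`-strongly convex `f t` (`0 < μ ≤ L`) sharing a common minimizer `x*`,
SGD iterates with AdaSPS stepsizes (`ℓ t = f t x*`), nonzero gradients at the
iterates and `c_p √(f_0(x_0) − f_0(x*)) ≥ 1`, one has for every `T`:
`‖x_T − x*‖² ≤ (1 − μ/(4 c_p² L² ‖x_0 − x*‖²))^T ‖x_0 − x*‖²`, and the contraction
factor lies in `[0, 1)`. -/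
theorem stmt_16 {d : ℕ} (L μ c_p : ℝ) (hμ : 0 < μ) (hμL : μ ≤ L) (hcp : 0 < c_p)
    (xstar : EuclideanSpace ℝ (Fin d))
    (f : ℕ → EuclideanSpace ℝ (Fin d) → ℝ)
    (G : ℕ → EuclideanSpace ℝ (Fin d) → EuclideanSpace ℝ (Fin d))
    (x : ℕ → EuclideanSpace ℝ (Fin d)) (η : ℕ → ℝ)
    (hgrad : ∀ t y, HasGradientAt (f t) (G t y) y)
    (hsmooth : ∀ t u v, ‖G t u - G t v‖ ≤ L * ‖u - v‖)
    (hsconv : ∀ t u v, f t v ≥ f t u + ⟪G t u, v - u⟫ + μ / 2 * ‖v - u‖ ^ 2)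
    (hmin : ∀ t y, f t xstar ≤ f t y)
    (hGne : ∀ t, G t (x t) ≠ 0)
    (hη0 : η 0 = (f 0 (x 0) - f 0 xstar) /
      (c_p * ‖G 0 (x 0)‖ ^ 2 * Real.sqrt (f 0 (x 0) - f 0 xstar)))
    (hη : ∀ t, η (t + 1) = min
      ((f (t + 1) (x (t + 1)) - f (t + 1) xstar) /
        (c_p * ‖G (t + 1) (x (t + 1))‖ ^ 2 *
          Real.sqrt (∑ s ∈ range (t + 2), (f s (x s) - f s xstar))))
      (η t))
    (hx : ∀ t, x (t + 1) = x t - η t • G t (x t))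
    (hscale : 1 ≤ c_p * Real.sqrt (f 0 (x 0) - f 0 xstar)) :
    (∀ T : ℕ, ‖x T - xstar‖ ^ 2 ≤
        (1 - μ / (4 * c_p ^ 2 * L ^ 2 * ‖x 0 - xstar‖ ^ 2)) ^ T * ‖x 0 - xstar‖ ^ 2) ∧
      0 ≤ 1 - μ / (4 * c_p ^ 2 * L ^ 2 * ‖x 0 - xstar‖ ^ 2) ∧
      1 - μ / (4 * c_p ^ 2 * L ^ 2 * ‖x 0 - xstar‖ ^ 2) < 1 := by
  have hL : 0 < L := lt_of_lt_of_le hμ hμL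
  set F : ℕ → ℝ := fun t => f t (x t) - f t xstar with hF
  set e : ℕ → ℝ := fun t => ‖x t - xstar‖ ^ 2 with he
  set g : ℕ → ℝ := fun t => ‖G t (x t)‖ with hg
  set S : ℕ → ℝ := fun t => ∑ s ∈ range (t + 1), F s with hS
  clear_value F e g S
  have he_nonneg : ∀ t, 0 ≤ e t := fun t => by simp only [he]; positivity
  have hgpos : ∀ t, 0 < g t := fun t => by
    simp only [hg]; exact norm_pos_iff.2 (hGne t)
  have hgb : ∀ t, g t ^ 2 ≤ 2 * L * F t := fun t => by
    simp only [hg, hF]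
    exact grad_sq_le' hL (hgrad t) (hsmooth t) (hmin t) (x t)
  have hFpos : ∀ t, 0 < F t := by
    intro t
    nlinarith [hgb t, pow_pos (hgpos t) 2]
  have hFnonneg : ∀ t, 0 ≤ F t := fun t => (hFpos t).le
  have hSpos : ∀ t, 0 < S t := fun t => by
    simp only [hS]
    exact Finset.sum_pos (fun i _ => hFpos i) nonempty_range_add_one
  have hS_mono : ∀ s t, s ≤ t → S s ≤ S t := by
    intro s t hst
    simp only [hS]
    exact Finset.sum_le_sum_of_subset_of_nonneg
      (Finset.range_subset_range.2 (by omega)) (fun i _ _ => hFnonneg i)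
  have hcand_pos : ∀ t, 0 < F t / (c_p * g t ^ 2 * Real.sqrt (S t)) := fun t =>
    div_pos (hFpos t)
      (mul_pos (mul_pos hcp (pow_pos (hgpos t) 2)) (Real.sqrt_pos.2 (hSpos t)))
  have hη0' : η 0 = F 0 / (c_p * g 0 ^ 2 * Real.sqrt (S 0)) := by
    simp only [hF, hg, hS, zero_add, Finset.sum_range_one]
    exact hη0
  have hη' : ∀ t, η (t + 1) =
      min (F (t + 1) / (c_p * g (t + 1) ^ 2 * Real.sqrt (S (t + 1)))) (η t) := by
    intro t
    have h := hη t
    simp only [hF] at h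
    simp only [hF, hg, hS]
    exact h
  have hη_pos : ∀ t, 0 < η t := by
    intro t
    induction t with
    | zero => rw [hη0']; exact hcand_pos 0
    | succ n ih => rw [hη' n]; exact lt_min (hcand_pos (n + 1)) ih
  have hη_le_cand : ∀ t, η t ≤ F t / (c_p * g t ^ 2 * Real.sqrt (S t)) := by
    intro t
    cases t with
    | zero => exact le_of_eq hη0'
    | succ n => rw [hη' n]; exact min_le_left _ _
  have hη_anti : ∀ s t, s ≤ t → η t ≤ η s := fun s t h =>
    antitone_nat_of_succ_le (fun n => by rw [hη' n]; exact min_le_right _ _) h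
  -- 1 ≤ c_p √(S t)
  have hcs : ∀ t, 1 ≤ c_p * Real.sqrt (S t) := by
    intro t
    have hF0S : F 0 ≤ S t := by
      simp only [hS]
      exact Finset.single_le_sum (fun i _ => hFnonneg i) (Finset.mem_range.2 (by omega))
    have h1 : Real.sqrt (F 0) ≤ Real.sqrt (S t) := Real.sqrt_le_sqrt hF0S
    have h2 : 1 ≤ c_p * Real.sqrt (F 0) := by simp only [hF]; exact hscale
    nlinarith [mul_le_mul_of_nonneg_left h1 hcp.le]
  have hη_le : ∀ t, η t * g t ^ 2 ≤ F t := by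
    intro t
    have h1 : F t / (c_p * g t ^ 2 * Real.sqrt (S t)) ≤ F t / g t ^ 2 := by
      rw [div_le_div_iff₀
        (mul_pos (mul_pos hcp (pow_pos (hgpos t) 2)) (Real.sqrt_pos.2 (hSpos t)))
        (pow_pos (hgpos t) 2)]
      nlinarith [mul_le_mul_of_nonneg_left (hcs t)
        (mul_nonneg (hFnonneg t) (pow_pos (hgpos t) 2).le)]
    have h2 := (hη_le_cand t).trans h1
    rw [le_div_iff₀ (pow_pos (hgpos t) 2)] at h2
    linarith
  -- one-step inequality
  have hstep : ∀ t, e (t + 1) ≤ (1 - μ * η t) * e t - η t * F t := by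
    intro t
    have expand : e (t + 1) = e t - 2 * η t * ⟪G t (x t), x t - xstar⟫ +
        η t ^ 2 * g t ^ 2 := by
      simp only [he, hg, hx t]
      have h0 : x t - η t • G t (x t) - xstar = (x t - xstar) - η t • G t (x t) := by abel
      rw [h0, norm_sub_sq_real]
      have h1 : ⟪x t - xstar, η t • G t (x t)⟫ = η t * ⟪G t (x t), x t - xstar⟫ := by
        rw [real_inner_smul_right, real_inner_comm]
      have h2 : ‖η t • G t (x t)‖ ^ 2 = η t ^ 2 * ‖G t (x t)‖ ^ 2 := by
        rw [norm_smul, mul_pow, Real.norm_eq_abs, sq_abs]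
      rw [h1, h2]
      ring
    have hinner : F t + μ / 2 * e t ≤ ⟪G t (x t), x t - xstar⟫ := by
      have h := hsconv t (x t) xstar
      have h1 : ⟪G t (x t), xstar - x t⟫ = -⟪G t (x t), x t - xstar⟫ := by
        rw [show xstar - x t = -(x t - xstar) by abel, inner_neg_right]
      have h2 : ‖xstar - x t‖ = ‖x t - xstar‖ := norm_sub_rev _ _
      rw [h1, h2] at h
      simp only [hF, he]
      linarith
    have hgg : η t ^ 2 * g t ^ 2 ≤ η t * F t := by
      have := mul_le_mul_of_nonneg_left (hη_le t) (hη_pos t).le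
      nlinarith [this]
    have hp : η t * (F t + μ / 2 * e t) ≤ η t * ⟪G t (x t), x t - xstar⟫ :=
      mul_le_mul_of_nonneg_left hinner (hη_pos t).le
    rw [expand]
    nlinarith [hp, hgg]
  -- telescoping sum
  have hsum : ∀ n, ∑ s ∈ range n, η s * F s ≤ e 0 - e n := by
    intro n
    induction n with
    | zero => simp
    | succ n ih =>
      rw [Finset.sum_range_succ]
      have h := hstep n
      nlinarith [mul_nonneg (mul_nonneg hμ.le (hη_pos n).le) (he_nonneg n)]
  have hηS : ∀ t, η t * S t ≤ e 0 := by
    intro t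
    have h1 : η t * S t ≤ ∑ s ∈ range (t + 1), η s * F s := by
      simp only [hS]
      rw [Finset.mul_sum]
      apply Finset.sum_le_sum
      intro i hi
      have : i ≤ t := by
        have := Finset.mem_range.1 hi
        omega
      exact mul_le_mul_of_nonneg_right (hη_anti i t this) (hFnonneg i)
    have h2 := hsum (t + 1)
    have h3 := he_nonneg (t + 1)
    linarith
  -- the stepsize equals some candidate
  have hη_form : ∀ t, ∃ s, s ≤ t ∧ η t = F s / (c_p * g s ^ 2 * Real.sqrt (S s)) := by
    intro t
    induction t with
    | zero => exact ⟨0, le_refl 0, hη0'⟩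
    | succ n ih =>
      rcases le_total (F (n + 1) / (c_p * g (n + 1) ^ 2 * Real.sqrt (S (n + 1)))) (η n)
        with h | h
      · exact ⟨n + 1, le_refl _, by rw [hη' n]; exact min_eq_left h⟩
      · obtain ⟨s, hs, hes⟩ := ih
        exact ⟨s, by omega, by rw [hη' n, min_eq_right h]; exact hes⟩
  have hd1 : ∀ t, (0:ℝ) < 2 * L * c_p * Real.sqrt (S t) := fun t =>
    mul_pos (mul_pos (mul_pos two_pos hL) hcp) (Real.sqrt_pos.2 (hSpos t))
  have hη_lb1 : ∀ t, 1 / (2 * L * c_p * Real.sqrt (S t)) ≤ η t := by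
    intro t
    obtain ⟨s, hst, hes⟩ := hη_form t
    rw [hes, div_le_div_iff₀
      (hd1 t)
      (mul_pos (mul_pos hcp (pow_pos (hgpos s) 2)) (Real.sqrt_pos.2 (hSpos s)))]
    have hs1 : Real.sqrt (S s) ≤ Real.sqrt (S t) := Real.sqrt_le_sqrt (hS_mono s t hst)
    have h2L : (0:ℝ) ≤ 2 * L * F s := by nlinarith [hFpos s]
    have h1 : g s ^ 2 * Real.sqrt (S s) ≤ (2 * L * F s) * Real.sqrt (S t) :=
      mul_le_mul (hgb s) hs1 (Real.sqrt_nonneg _) h2L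
    nlinarith [mul_le_mul_of_nonneg_left h1 hcp.le]
  have he0pos : 0 < e 0 := by
    have hne : x 0 - xstar ≠ 0 := by
      intro h
      have hx0 : x 0 = xstar := by rwa [sub_eq_zero] at h
      have := hFpos 0
      rw [hF] at this
      simp [hx0] at this
    simp only [he]
    have : 0 < ‖x 0 - xstar‖ := norm_pos_iff.2 hne
    positivity
  have hd2 : (0:ℝ) < 4 * L ^ 2 * c_p ^ 2 * e 0 :=
    mul_pos (mul_pos (mul_pos (by norm_num) (pow_pos hL 2)) (pow_pos hcp 2)) he0pos
  have hd3 : (0:ℝ) < 4 * c_p ^ 2 * L ^ 2 * e 0 :=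
    mul_pos (mul_pos (mul_pos (by norm_num) (pow_pos hcp 2)) (pow_pos hL 2)) he0pos
  have hη_lb : ∀ t, 1 / (4 * L ^ 2 * c_p ^ 2 * e 0) ≤ η t := by
    intro t
    have h1 := hη_lb1 t
    have h2 := hηS t
    have hsq : Real.sqrt (S t) ^ 2 = S t := Real.sq_sqrt (hSpos t).le
    have hsp : 0 < Real.sqrt (S t) := Real.sqrt_pos.2 (hSpos t)
    rw [div_le_iff₀ (hd1 t)] at h1
    rw [div_le_iff₀ hd2]
    have ha : (0:ℝ) ≤ 4 * L ^ 2 * c_p ^ 2 * η t :=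
      (mul_pos (mul_pos (mul_pos (by norm_num) (pow_pos hL 2)) (pow_pos hcp 2))
        (hη_pos t)).le
    have hb : (0:ℝ) ≤ η t * (2 * L * c_p * Real.sqrt (S t)) :=
      (mul_pos (hη_pos t) (hd1 t)).le
    have h2' : η t * Real.sqrt (S t) ^ 2 ≤ e 0 := by rw [hsq]; exact h2
    nlinarith [mul_le_mul_of_nonneg_left h2' ha, mul_le_mul h1 h1 zero_le_one hb]
  have hμdiv : ∀ t, μ / (4 * c_p ^ 2 * L ^ 2 * e 0) ≤ μ * η t := by
    intro t
    have h1 := hη_lb t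
    rw [div_le_iff₀ hd2] at h1
    rw [div_le_iff₀ hd3]
    nlinarith [mul_le_mul_of_nonneg_left h1 hμ.le]
  have hρ0 : 0 ≤ 1 - μ / (4 * c_p ^ 2 * L ^ 2 * e 0) := by
    have hμη : μ * η 0 < 1 := by
      have h := hstep 0
      have h1 := he_nonneg 1
      have h2 := mul_pos (hη_pos 0) (hFpos 0)
      nlinarith [he0pos]
    linarith [hμdiv 0]
  have hρ1 : 1 - μ / (4 * c_p ^ 2 * L ^ 2 * e 0) < 1 := by
    have : 0 < μ / (4 * c_p ^ 2 * L ^ 2 * e 0) := div_pos hμ hd3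
    linarith
  have key : ∀ T, e T ≤ (1 - μ / (4 * c_p ^ 2 * L ^ 2 * e 0)) ^ T * e 0 := by
    intro T
    induction T with
    | zero => simp
    | succ n ih =>
      have h1 : e (n + 1) ≤ (1 - μ * η n) * e n := by
        linarith [hstep n, (mul_pos (hη_pos n) (hFpos n)).le]
      have h2 : (1 - μ * η n) ≤ 1 - μ / (4 * c_p ^ 2 * L ^ 2 * e 0) := by
        linarith [hμdiv n]
      calc e (n + 1) ≤ (1 - μ * η n) * e n := h1
        _ ≤ (1 - μ / (4 * c_p ^ 2 * L ^ 2 * e 0)) * e n :=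
            mul_le_mul_of_nonneg_right h2 (he_nonneg n)
        _ ≤ (1 - μ / (4 * c_p ^ 2 * L ^ 2 * e 0)) *
            ((1 - μ / (4 * c_p ^ 2 * L ^ 2 * e 0)) ^ n * e 0) :=
            mul_le_mul_of_nonneg_left ih hρ0
        _ = (1 - μ / (4 * c_p ^ 2 * L ^ 2 * e 0)) ^ (n + 1) * e 0 := by ring
  simp only [he] at key hρ0 hρ1
  exact ⟨key, hρ0, hρ1⟩
end
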